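/- Let r ≥ 2 and let n₁ ≥ n₂ ≥ … ≥ n_r ≥ 1 with n = n₁ + n₂ + … + n_r. If 3·n₁ > 2·n, then the isometric path number of the complete r-partite graph K_{n₁,n₂,…,n_r} equals ⌈n₁/2⌉. -/

import Mathlib

open SimpleGraph

/-- A walk is an *isometric path* if it is a path whose length equals the
distance in `G` between its two endpoints (i.e. a shortest path). -/
def SimpleGraph.Walk.IsIsometricPath {V : Type*} {G : SimpleGraph V} {u v : V}
    (p : G.Walk u v) : Prop :=
  p.IsPath ∧ p.length = G.dist u v

/-- The *isometric path number* of `G`: the minimum number of isometric paths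
needed to cover all vertices of `G`. -/
noncomputable def isometricPathNumber {V : Type*} (G : SimpleGraph V) : ℕ :=
  sInf {k | ∃ (u v : Fin k → V) (p : ∀ i, G.Walk (u i) (v i)),
    (∀ i, (p i).IsIsometricPath) ∧ ∀ w : V, ∃ i, w ∈ (p i).support}

lemma cmg_adj {r : ℕ} {n : Fin r → ℕ} {u v : Σ i : Fin r, Fin (n i)} :
    (completeMultipartiteGraph (fun i : Fin r => Fin (n i))).Adj u v ↔ u.1 ≠ v.1 := by simp

lemma exists_mid {r : ℕ} (hr : 2 ≤ r) {n : Fin r → ℕ} (hpos : ∀ i, 1 ≤ n i)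
    (u v : Σ i : Fin r, Fin (n i)) (huv : u.1 = v.1) :
    ∃ w, (completeMultipartiteGraph (fun i : Fin r => Fin (n i))).Adj u w ∧
      (completeMultipartiteGraph (fun i : Fin r => Fin (n i))).Adj w v := by
  obtain ⟨j, hj⟩ : ∃ j : Fin r, j ≠ u.1 :=
    Fintype.exists_ne_of_one_lt_card (by simpa using (show 1 < r by omega)) u.1
  exact ⟨⟨j, ⟨0, hpos j⟩⟩, cmg_adj.mpr (Ne.symm hj), cmg_adj.mpr (huv ▸ hj)⟩

lemma cmg_dist_le_two {r : ℕ} (hr : 2 ≤ r) {n : Fin r → ℕ} (hpos : ∀ i, 1 ≤ n i)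
    (u v : Σ i : Fin r, Fin (n i)) :
    (completeMultipartiteGraph (fun i : Fin r => Fin (n i))).dist u v ≤ 2 := by
  by_cases hp : u.1 = v.1
  · obtain ⟨w, h1, h2⟩ := exists_mid hr hpos u v hp
    exact (SimpleGraph.dist_le (Walk.cons h1 (Walk.cons h2 Walk.nil))).trans (by simp)
  · exact (SimpleGraph.dist_le (cmg_adj.mpr hp).toWalk).trans (by simp)

lemma cmg_dist_eq_two {r : ℕ} (hr : 2 ≤ r) {n : Fin r → ℕ} (hpos : ∀ i, 1 ≤ n i)
    {u v : Σ i : Fin r, Fin (n i)} (huv : u.1 = v.1) (hne : u ≠ v) :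
    (completeMultipartiteGraph (fun i : Fin r => Fin (n i))).dist u v = 2 := by
  obtain ⟨w, h1, h2⟩ := exists_mid hr hpos u v huv
  have hre : (completeMultipartiteGraph (fun i : Fin r => Fin (n i))).Reachable u v :=
    ⟨Walk.cons h1 (Walk.cons h2 Walk.nil)⟩
  have h0 : (completeMultipartiteGraph (fun i : Fin r => Fin (n i))).dist u v ≠ 0 :=
    fun hh => hne (hre.dist_eq_zero_iff.mp hh)
  have hone : (completeMultipartiteGraph (fun i : Fin r => Fin (n i))).dist u v ≠ 1 := by
    intro hh
    exact (cmg_adj.mp (dist_eq_one_iff_adj.mp hh)) huv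
  have := cmg_dist_le_two hr hpos u v
  omega

lemma supp_filter {r : ℕ} {n : Fin r → ℕ} {u v : Σ i : Fin r, Fin (n i)}
    (p : (completeMultipartiteGraph (fun i : Fin r => Fin (n i))).Walk u v)
    (hl : p.length ≤ 2) (i0 : Fin r) :
    ((p.support.toFinset).filter (fun w => w.1 = i0)).card ≤ 2 := by
  cases p with
  | nil =>
    exact (Finset.card_filter_le _ _).trans (by simp)
  | cons h q =>
    cases q with
    | nil =>
      refine (Finset.card_filter_le _ _).trans ?_
      exact (List.toFinset_card_le _).trans (by simp)
    | @cons _ b _ h2 q2 =>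
      cases q2 with
      | cons h3 q3 => simp [SimpleGraph.Walk.length_cons] at hl
      | nil =>
        rename_i c
        by_cases hu : u.1 = i0
        · have hbne : ¬ (c.1 = i0) := fun hh => (cmg_adj.mp h) (hu.trans hh.symm)
          refine le_trans (Finset.card_le_card (t := {u, v}) ?_) ?_
          · intro x hx
            simp only [Finset.mem_filter, List.mem_toFinset, Walk.support_cons,
              Walk.support_nil, List.mem_cons, List.mem_singleton,
              List.not_mem_nil, or_false] at hx
            rcases hx with ⟨hx1 | hx1 | hx1, hx2⟩
            · simp [hx1]
            · exact absurd (hx1 ▸ hx2) hbne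
            · simp [hx1]
          · exact (Finset.card_insert_le _ _).trans (by simp)
        · refine le_trans (Finset.card_le_card (t := {c, v}) ?_) ?_
          · intro x hx
            simp only [Finset.mem_filter, List.mem_toFinset, Walk.support_cons,
              Walk.support_nil, List.mem_cons, List.mem_singleton,
              List.not_mem_nil, or_false] at hx
            rcases hx with ⟨hx1 | hx1 | hx1, hx2⟩
            · exact absurd (hx1 ▸ hx2) hu
            · simp [hx1]
            · simp [hx1]
          · exact (Finset.card_insert_le _ _).trans (by simp)


lemma card_part {r : ℕ} (n : Fin r → ℕ) (i0 : Fin r) :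
    Fintype.card {v : Σ i : Fin r, Fin (n i) // v.1 = i0} = n i0 := by
  have e0 : {v : Σ i : Fin r, Fin (n i) // v.1 = i0} ≃ Fin (n i0) :=
    { toFun := fun x => x.2 ▸ x.1.2
      invFun := fun j => ⟨⟨i0, j⟩, rfl⟩
      left_inv := by rintro ⟨⟨i, a⟩, rfl⟩; rfl
      right_inv := fun j => rfl }
  rw [Fintype.card_congr e0, Fintype.card_fin]

/-- The family of covering walks for the upper bound. -/
def pathsT {r : ℕ} {n : Fin r → ℕ} (i0 : Fin r) {K m : ℕ}
    (e : Fin m → {v : Σ i : Fin r, Fin (n i) // v.1 ≠ i0})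
    (hK : ∀ k : Fin K, 2 * (k : ℕ) < n i0) (hm : 0 < m) (k : Fin K) :
    Σ uv : (Σ i : Fin r, Fin (n i)) × (Σ i : Fin r, Fin (n i)),
      (completeMultipartiteGraph (fun i : Fin r => Fin (n i))).Walk uv.1 uv.2 :=
  if hk : 2 * (k : ℕ) + 1 < n i0 then
    ⟨(⟨i0, ⟨2 * k, hK k⟩⟩, ⟨i0, ⟨2 * k + 1, hk⟩⟩),
      Walk.cons (cmg_adj.mpr (Ne.symm (e ⟨min k (m - 1), by omega⟩).2))
        (Walk.cons (cmg_adj.mpr ((e ⟨min k (m - 1), by omega⟩).2)) Walk.nil)⟩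
  else
    ⟨(⟨i0, ⟨2 * k, hK k⟩⟩, (e ⟨min k (m - 1), by omega⟩).1),
      Walk.cons (cmg_adj.mpr (Ne.symm (e ⟨min k (m - 1), by omega⟩).2)) Walk.nil⟩

theorem stmt_0 (r : ℕ) (hr : 2 ≤ r) (n : Fin r → ℕ) (hpos : ∀ i, 1 ≤ n i)
    (hsorted : Antitone n) (N : ℕ) (hN : N = ∑ i, n i)
    (h : 3 * n ⟨0, by omega⟩ > 2 * N) :
    isometricPathNumber (completeMultipartiteGraph (fun i : Fin r => Fin (n i))) =
      (n ⟨0, by omega⟩ + 1) / 2 := by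
  classical
  have hr0 : 0 < r := by omega
  set i0 : Fin r := ⟨0, hr0⟩ with hi0def
  have h' : 3 * n i0 > 2 * N := h
  show isometricPathNumber (completeMultipartiteGraph (fun i : Fin r => Fin (n i))) =
      (n i0 + 1) / 2
  -- cardinalities
  have hcardV : Fintype.card (Σ i : Fin r, Fin (n i)) = N := by
    simp [hN]
  have card0 : Fintype.card {v : Σ i : Fin r, Fin (n i) // v.1 = i0} = n i0 :=
    card_part n i0
  set m := Fintype.card {v : Σ i : Fin r, Fin (n i) // v.1 ≠ i0} with hmdef
  have hmcard : m = N - n i0 := by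
    have := Fintype.card_subtype_compl (fun v : Σ i : Fin r, Fin (n i) => v.1 = i0)
    rw [hmdef]
    simpa [card0, hcardV] using this
  have hle : n i0 ≤ N := by
    rw [← card0, ← hcardV]; exact Fintype.card_subtype_le _
  have h2m : 2 * m < n i0 := by omega
  have hm1 : 0 < m := by
    rw [hmdef]
    exact Fintype.card_pos_iff.mpr
      ⟨⟨⟨⟨1, hr⟩, ⟨0, hpos _⟩⟩, by simp [hi0def, Fin.ext_iff]⟩⟩
  let e : Fin m ≃ {v : Σ i : Fin r, Fin (n i) // v.1 ≠ i0} := (Fintype.equivFin _).symm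
  have hK : ∀ k : Fin ((n i0 + 1) / 2), 2 * (k : ℕ) < n i0 := fun k => by
    have := k.2; omega
  -- the covering family
  have hmem : (n i0 + 1) / 2 ∈ {k | ∃ (u v : Fin k → Σ i : Fin r, Fin (n i))
      (p : ∀ i, (completeMultipartiteGraph (fun i : Fin r => Fin (n i))).Walk (u i) (v i)),
      (∀ i, (p i).IsIsometricPath) ∧
      ∀ w : Σ i : Fin r, Fin (n i), ∃ i, w ∈ (p i).support} := by
    refine ⟨fun k => (pathsT i0 (fun j => e j) hK hm1 k).1.1,
            fun k => (pathsT i0 (fun j => e j) hK hm1 k).1.2,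
            fun k => (pathsT i0 (fun j => e j) hK hm1 k).2, ?_, ?_⟩
    · intro k
      unfold pathsT
      dsimp only
      by_cases hk : 2 * (k : ℕ) + 1 < n i0
      · rw [dif_pos hk]
        constructor
        · rw [Walk.isPath_def]
          simp only [Walk.support_cons, Walk.support_nil, List.nodup_cons, List.mem_cons,
            List.mem_singleton, List.not_mem_nil, or_false, not_or, List.nodup_nil, and_true]
          refine ⟨⟨?_, ?_⟩, ?_⟩
          · intro hh
            exact (e ⟨min k (m - 1), by omega⟩).2 ((congrArg Sigma.fst hh).symm)
          · intro hh
            have : (2 * (k : ℕ) : ℕ) = 2 * (k : ℕ) + 1 := by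
              simpa [Fin.ext_iff] using hh
            omega
          · refine ⟨fun hh => ?_, not_false⟩
            exact (e ⟨min k (m - 1), by omega⟩).2 (congrArg Sigma.fst hh)
        · have : (completeMultipartiteGraph (fun i : Fin r => Fin (n i))).dist
              (⟨i0, ⟨2 * k, hK k⟩⟩ : Σ i : Fin r, Fin (n i)) ⟨i0, ⟨2 * k + 1, hk⟩⟩ = 2 := by
            refine cmg_dist_eq_two hr hpos rfl ?_
            intro hh
            have : (2 * (k : ℕ) : ℕ) = 2 * (k : ℕ) + 1 := by
              simpa [Fin.ext_iff] using hh
            omega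
          simp [this]
      · rw [dif_neg hk]
        constructor
        · rw [Walk.isPath_def]
          simp only [Walk.support_cons, Walk.support_nil, List.nodup_cons, List.mem_cons,
            List.mem_singleton, List.not_mem_nil, or_false, not_or, List.nodup_nil, and_true]
          refine ⟨fun hh => ?_, not_false⟩
          exact (e ⟨min k (m - 1), by omega⟩).2 ((congrArg Sigma.fst hh).symm)
        · have : (completeMultipartiteGraph (fun i : Fin r => Fin (n i))).dist
              (⟨i0, ⟨2 * k, hK k⟩⟩ : Σ i : Fin r, Fin (n i))
              (e ⟨min k (m - 1), by omega⟩).1 = 1 :=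
            dist_eq_one_iff_adj.mpr (cmg_adj.mpr (Ne.symm (e ⟨min k (m - 1), by omega⟩).2))
          simp [this]
    · intro w
      by_cases hw : w.1 = i0
      · obtain ⟨iw, aw⟩ := w
        simp only at hw
        subst hw
        have haw := aw.2
        refine ⟨⟨(aw : ℕ) / 2, by omega⟩, ?_⟩
        unfold pathsT
        dsimp only
        by_cases hk : 2 * ((aw : ℕ) / 2) + 1 < n i0
        · rw [dif_pos hk]
          simp only [Walk.support_cons, Walk.support_nil, List.mem_cons, List.mem_singleton,
            List.not_mem_nil, or_false]
          rcases Nat.lt_or_ge ((aw : ℕ) % 2) 1 with hpar | hpar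
          · left
            exact congrArg (Sigma.mk i0)
              (Fin.ext (show (aw : ℕ) = 2 * ((aw : ℕ) / 2) from by omega))
          · right; right
            exact congrArg (Sigma.mk i0)
              (Fin.ext (show (aw : ℕ) = 2 * ((aw : ℕ) / 2) + 1 from by omega))
        · rw [dif_neg hk]
          simp only [Walk.support_cons, Walk.support_nil, List.mem_cons, List.mem_singleton,
            List.not_mem_nil, or_false]
          left
          exact congrArg (Sigma.mk i0)
            (Fin.ext (show (aw : ℕ) = 2 * ((aw : ℕ) / 2) from by omega))
      · set j : Fin m := e.symm ⟨w, hw⟩ with hjdef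
        have hjm := j.2
        refine ⟨⟨(j : ℕ), by omega⟩, ?_⟩
        unfold pathsT
        dsimp only
        have hk : 2 * (j : ℕ) + 1 < n i0 := by omega
        rw [dif_pos hk]
        simp only [Walk.support_cons, Walk.support_nil, List.mem_cons, List.mem_singleton,
          List.not_mem_nil, or_false]
        right; left
        have hidx : (⟨min ((j : ℕ)) (m - 1), by omega⟩ : Fin m) = j :=
          Fin.ext (show min ((j : ℕ)) (m - 1) = (j : ℕ) from by omega)
        rw [hidx, hjdef, Equiv.apply_symm_apply]
  refine le_antisymm (Nat.sInf_le hmem) (le_csInf ⟨_, hmem⟩ ?_)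
  rintro k ⟨u, v, p, hiso, hcov⟩
  choose f hf using fun j : Fin (n i0) => hcov ⟨i0, j⟩
  have key : n i0 ≤ 2 * k := by
    have hcu : (Finset.univ : Finset (Fin (n i0))).card = n i0 := by simp
    have hsum := Finset.card_eq_sum_card_fiberwise
      (f := f) (s := (Finset.univ : Finset (Fin (n i0)))) (t := Finset.univ)
      (fun x _ => Finset.mem_univ _)
    have hbd : ∀ i : Fin k,
        (Finset.univ.filter (fun j => f j = i)).card ≤ 2 := by
      intro i
      have hinj : ∀ a ∈ Finset.univ.filter (fun j => f j = i),
          ∀ b ∈ Finset.univ.filter (fun j => f j = i),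
          (⟨i0, a⟩ : Σ i : Fin r, Fin (n i)) = ⟨i0, b⟩ → a = b := by
        intro a _ b _ hab
        simpa using hab
      have hmaps : ∀ a ∈ Finset.univ.filter (fun j => f j = i),
          (⟨i0, a⟩ : Σ i : Fin r, Fin (n i)) ∈
            ((p i).support.toFinset.filter (fun w => w.1 = i0)) := by
        intro a ha
        simp only [Finset.mem_filter, Finset.mem_univ, true_and] at ha
        simp only [Finset.mem_filter, List.mem_toFinset]
        exact ⟨ha ▸ hf a, trivial⟩
      have := Finset.card_le_card_of_injOn (fun a => (⟨i0, a⟩ : Σ i : Fin r, Fin (n i)))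
        hmaps hinj
      refine this.trans (supp_filter (p i) ?_ i0)
      rw [(hiso i).2]
      exact cmg_dist_le_two hr hpos _ _
    calc n i0 = ∑ i : Fin k, (Finset.univ.filter (fun j => f j = i)).card := by
          rw [← hsum, hcu]
      _ ≤ ∑ _i : Fin k, 2 := Finset.sum_le_sum fun i _ => hbd i
      _ = 2 * k := by simp [mul_comm]
  omega
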